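/- arXiv:2101.07474 — 5 statements merged into one kernel-verified Lean document; each statement's English description precedes it below -/
import Mathlib

section
/- Fix M > 0, vectors b, k ∈ ℝⁿ, and a real n × n matrix A such that both A and A + b kᵀ are invertible. Then the set of equilibrium points {x ∈ ℝⁿ : A x + sat_M(⟨k, x⟩)·b = 0} is contained in the three-point set {0, −M·A⁻¹ b, M·A⁻¹ b}; in particular the closed loop system ẋ = A x + b·sat_M(k x) has at most three equilibrium points. -/
open RealInnerProductSpace

/-- The saturation function `sat_M (s) = sign(s) · min (M, |s|)`. -/
noncomputable def sat (M s : ℝ) : ℝ := Real.sign s * min M |s|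

lemma toEuclideanLin_mul_apply {n : ℕ} (A B : Matrix (Fin n) (Fin n) ℝ)
    (x : EuclideanSpace ℝ (Fin n)) :
    Matrix.toEuclideanLin (A * B) x = Matrix.toEuclideanLin A (Matrix.toEuclideanLin B x) := by
  simp [Matrix.toEuclideanLin_apply, Matrix.mulVec_mulVec]

lemma toEuclideanLin_one_apply {n : ℕ} (x : EuclideanSpace ℝ (Fin n)) :
    Matrix.toEuclideanLin (1 : Matrix (Fin n) (Fin n) ℝ) x = x := by
  simp [Matrix.toEuclideanLin_apply]

lemma toEuclideanLin_vecMulVec {n : ℕ} (b k x : EuclideanSpace ℝ (Fin n)) :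
    Matrix.toEuclideanLin (Matrix.vecMulVec b k) x = ⟪k, x⟫ • b := by
  ext i
  simp only [Matrix.toEuclideanLin_apply, Matrix.vecMulVec, Matrix.mulVec, dotProduct,
    Matrix.of_apply, PiLp.inner_apply, RCLike.inner_apply, conj_trivial,
    PiLp.toLp_apply, PiLp.smul_apply, smul_eq_mul]
  rw [Finset.sum_mul]
  congr 1; ext j; ring

/-- If both `A` and `A + b kᵀ` are invertible, the set of equilibrium points of
`ẋ = A x + b · sat_M(⟨k, x⟩)` is contained in `{0, -M • A⁻¹ b, M • A⁻¹ b}`;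
in particular there are at most three equilibrium points. -/
theorem equilibria_subset_three_points {n : ℕ} (M : ℝ) (hM : 0 < M)
    (A : Matrix (Fin n) (Fin n) ℝ) (b k : EuclideanSpace ℝ (Fin n))
    (hA : IsUnit A) (hABK : IsUnit (A + Matrix.vecMulVec b k)) :
    {x : EuclideanSpace ℝ (Fin n) | Matrix.toEuclideanLin A x + sat M ⟪k, x⟫ • b = 0} ⊆
      {0, -(M • Matrix.toEuclideanLin A⁻¹ b), M • Matrix.toEuclideanLin A⁻¹ b} := by
  intro x hx
  simp only [Set.mem_setOf_eq] at hx
  have hdetA := (Matrix.isUnit_iff_isUnit_det _).mp hA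
  have hAinv : A⁻¹ * A = 1 := Matrix.nonsing_inv_mul _ hdetA
  rcases le_or_gt |⟪k, x⟫| M with h | h
  · -- unsaturated case: x = 0
    left
    have hsat : sat M ⟪k, x⟫ = ⟪k, x⟫ := by
      rw [sat, min_eq_right h]
      rcases lt_trichotomy (⟪k, x⟫ : ℝ) 0 with hs | hs | hs
      · rw [Real.sign_of_neg hs, abs_of_neg hs]; ring
      · rw [hs]; simp
      · rw [Real.sign_of_pos hs, abs_of_pos hs, one_mul]
    rw [hsat] at hx
    have key : Matrix.toEuclideanLin (A + Matrix.vecMulVec b k) x = 0 := by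
      rw [map_add, LinearMap.add_apply, toEuclideanLin_vecMulVec]
      exact hx
    have hdet := (Matrix.isUnit_iff_isUnit_det _).mp hABK
    have hinv : (A + Matrix.vecMulVec b k)⁻¹ * (A + Matrix.vecMulVec b k) = 1 :=
      Matrix.nonsing_inv_mul _ hdet
    calc x = Matrix.toEuclideanLin ((A + Matrix.vecMulVec b k)⁻¹ *
            (A + Matrix.vecMulVec b k)) x := by rw [hinv, toEuclideanLin_one_apply]
      _ = Matrix.toEuclideanLin (A + Matrix.vecMulVec b k)⁻¹
            (Matrix.toEuclideanLin (A + Matrix.vecMulVec b k) x) := toEuclideanLin_mul_apply ..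
      _ = 0 := by rw [key, map_zero]
  · -- saturated case
    have hmin : min M |⟪k, x⟫| = M := min_eq_left h.le
    have hne : ⟪k, x⟫ ≠ 0 := by
      intro h0; rw [h0, abs_zero] at h; exact absurd h (not_lt.mpr hM.le)
    have hxinv : ∀ c : ℝ, Matrix.toEuclideanLin A x + c • b = 0 →
        x = -(c • Matrix.toEuclideanLin A⁻¹ b) := by
      intro c hc
      have : Matrix.toEuclideanLin A x = -(c • b) := by
        rw [eq_neg_iff_add_eq_zero]; exact hc
      calc x = Matrix.toEuclideanLin (A⁻¹ * A) x := by rw [hAinv, toEuclideanLin_one_apply]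
        _ = Matrix.toEuclideanLin A⁻¹ (Matrix.toEuclideanLin A x) := toEuclideanLin_mul_apply ..
        _ = -(c • Matrix.toEuclideanLin A⁻¹ b) := by rw [this, map_neg, map_smul]
    rcases hne.lt_or_gt with hneg | hpos
    · -- s < 0 : sat = -M, x = M • A⁻¹ b
      right; right
      have hsat : sat M ⟪k, x⟫ = -M := by
        rw [sat, hmin, Real.sign_of_neg hneg]; ring
      rw [hsat] at hx
      have h2 := hxinv (-M) hx
      rw [neg_smul, neg_neg] at h2
      exact h2
    · -- s > 0 : sat = M, x = -(M • A⁻¹ b)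
      right; left
      have hsat : sat M ⟪k, x⟫ = M := by
        rw [sat, hmin, Real.sign_of_pos hpos, one_mul]
      rw [hsat] at hx
      exact hxinv M hx
end

section
/- Let A be a real n × n matrix all of whose complex eigenvalues have positive real part (anti-stable), and let b, k ∈ ℝⁿ be such that all complex eigenvalues of A + b kᵀ have negative real part (Hurwitz). Then A is invertible and (−1)ⁿ · (1 + ⟨k, A⁻¹ b⟩) > 0; in particular, if n is even then ⟨k, A⁻¹ b⟩ > −1, and if n is odd then ⟨k, A⁻¹ b⟩ < −1. -/
open Polynomial Filter in
lemma eval_zero_pos_of_monic_of_no_nonneg_root (p : ℝ[X]) (hp : p.Monic)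
    (h : ∀ x : ℝ, 0 ≤ x → p.eval x ≠ 0) : 0 < p.eval 0 := by
  rcases eq_or_lt_of_le (Nat.zero_le p.natDegree) with h0 | h0
  · have : p = 1 := hp.natDegree_eq_zero.mp h0.symm
    simp [this]
  · have hdeg : 0 < p.degree := natDegree_pos_iff_degree_pos.mp h0
    have htend : Tendsto (fun x => p.eval x) atTop atTop :=
      tendsto_atTop_of_leadingCoeff_nonneg p hdeg (by rw [hp.leadingCoeff]; norm_num)
    obtain ⟨M, hM0, hMpos⟩ : ∃ M : ℝ, 0 ≤ M ∧ 0 < p.eval M := by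
      obtain ⟨M, h1, h2⟩ := ((htend.eventually_gt_atTop 0).and (eventually_ge_atTop (0:ℝ))).exists
      exact ⟨M, h2, h1⟩
    by_contra hle
    push_neg at hle
    have hlt : p.eval 0 < 0 := lt_of_le_of_ne hle (h 0 le_rfl)
    have hIVT := intermediate_value_Icc hM0 (p.continuous.continuousOn (s := Set.Icc 0 M))
    obtain ⟨c, hc, hc0⟩ := hIVT ⟨hlt.le, hMpos.le⟩
    exact h c hc.1 hc0

open Polynomial in
lemma sign_eval_zero_of_monic_of_no_nonpos_root (p : ℝ[X]) (hp : p.Monic)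
    (h : ∀ x : ℝ, x ≤ 0 → p.eval x ≠ 0) : 0 < (-1 : ℝ) ^ p.natDegree * p.eval 0 := by
  set n := p.natDegree with hn
  rcases Nat.eq_zero_or_pos n with h0 | h0
  · have : p = 1 := hp.natDegree_eq_zero.mp h0
    simp [this, h0]
  · set q : ℝ[X] := C ((-1 : ℝ) ^ n) * p.comp (-X) with hq
    have hnegX : (-X : ℝ[X]).natDegree = 1 := by simp
    have hqeval : ∀ x : ℝ, q.eval x = (-1 : ℝ) ^ n * p.eval (-x) := by
      intro x; simp [hq]
    have hqmonic : q.Monic := by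
      unfold Monic
      rw [hq, leadingCoeff_mul, leadingCoeff_C,
        leadingCoeff_comp (by rw [hnegX]; norm_num)]
      simp [hp.leadingCoeff, ← hn]
      rw [← pow_add]
      exact Even.neg_one_pow ⟨n, rfl⟩
    have hq0 : 0 < q.eval 0 := by
      apply eval_zero_pos_of_monic_of_no_nonneg_root q hqmonic
      intro x hx
      rw [hqeval]
      intro hcon
      have : p.eval (-x) = 0 := by
        rcases Nat.even_or_odd n with he | ho
        · simpa [he.neg_one_pow] using hcon
        · rw [ho.neg_one_pow] at hcon; linarith [hcon]
      exact h (-x) (by linarith) this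
    rw [hqeval 0, neg_zero] at hq0
    exact hq0

open RealInnerProductSpace

open Polynomial Matrix in
/-- If `A` is anti-stable and `A + b kᵀ` is Hurwitz, then `A` is invertible and
`(-1)ⁿ (1 + ⟨k, A⁻¹ b⟩) > 0`; in particular `⟨k, A⁻¹ b⟩ > -1` for even `n` and
`⟨k, A⁻¹ b⟩ < -1` for odd `n`. -/
theorem parity_dichotomy {n : ℕ}
    (A : Matrix (Fin n) (Fin n) ℝ) (b k : EuclideanSpace ℝ (Fin n))
    (hA : ∀ μ ∈ (Matrix.charpoly (A.map (algebraMap ℝ ℂ))).roots, 0 < μ.re)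
    (hABK : ∀ μ ∈ (Matrix.charpoly ((A + Matrix.vecMulVec b k).map (algebraMap ℝ ℂ))).roots,
      μ.re < 0) :
    IsUnit A ∧
    0 < (-1 : ℝ) ^ n * (1 + ⟪k, Matrix.toEuclideanLin A⁻¹ b⟫) ∧
    (Even n → -1 < ⟪k, Matrix.toEuclideanLin A⁻¹ b⟫) ∧
    (Odd n → ⟪k, Matrix.toEuclideanLin A⁻¹ b⟫ < -1) := by
  have hroot : ∀ (M : Matrix (Fin n) (Fin n) ℝ) (x : ℝ), M.charpoly.eval x = 0 →
      (x : ℂ) ∈ (Matrix.charpoly (M.map (algebraMap ℝ ℂ))).roots := by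
    intro M x hx
    rw [Matrix.charpoly_map, mem_roots_map M.charpoly_monic.ne_zero,
      show (x : ℂ) = algebraMap ℝ ℂ x from rfl, eval₂_at_apply, hx, map_zero]
  have hdetA : 0 < A.det := by
    have h1 : ∀ x : ℝ, x ≤ 0 → A.charpoly.eval x ≠ 0 := by
      intro x hx hc
      have := hA _ (hroot A x hc)
      simp only [Complex.ofReal_re] at this
      linarith
    have h2 := sign_eval_zero_of_monic_of_no_nonpos_root A.charpoly A.charpoly_monic h1
    rw [A.charpoly_natDegree_eq_dim, Fintype.card_fin] at h2
    rw [Matrix.det_eq_sign_charpoly_coeff, Fintype.card_fin, coeff_zero_eq_eval_zero]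
    exact h2
  set B := A + Matrix.vecMulVec b k with hB
  have hdetB : 0 < (-1 : ℝ) ^ n * B.det := by
    have h1 : ∀ x : ℝ, 0 ≤ x → B.charpoly.eval x ≠ 0 := by
      intro x hx hc
      have := hABK _ (hroot B x hc)
      simp only [Complex.ofReal_re] at this
      linarith
    have h2 := eval_zero_pos_of_monic_of_no_nonneg_root B.charpoly B.charpoly_monic h1
    rw [Matrix.det_eq_sign_charpoly_coeff, Fintype.card_fin, coeff_zero_eq_eval_zero,
      ← mul_assoc, ← pow_add, Even.neg_one_pow ⟨n, rfl⟩, one_mul]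
    exact h2
  have hAdet : IsUnit A.det := isUnit_iff_ne_zero.mpr hdetA.ne'
  have hML : B.det = A.det * (1 + k ⬝ᵥ (A⁻¹ *ᵥ b)) := by
    have hfact : B = A * (1 + Matrix.replicateCol (Fin 1) (A⁻¹ *ᵥ b) * Matrix.replicateRow (Fin 1) k) := by
      rw [Matrix.mul_add, Matrix.mul_one, ← Matrix.mul_assoc, ← Matrix.replicateCol_mulVec,
        Matrix.mulVec_mulVec, Matrix.mul_nonsing_inv A hAdet, Matrix.one_mulVec,
        hB, Matrix.vecMulVec_eq (Fin 1)]
      rfl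
    rw [hfact, Matrix.det_mul]
    erw [Matrix.det_one_add_replicateCol_mul_replicateRow]
  have hinner : ⟪k, Matrix.toEuclideanLin A⁻¹ b⟫ = k ⬝ᵥ (A⁻¹ *ᵥ b) := by
    rw [Matrix.toEuclideanLin_apply]
    simp only [PiLp.inner_apply, RCLike.inner_apply, starRingEnd_apply, star_trivial,
      dotProduct]
    exact Finset.sum_congr rfl fun _ _ => mul_comm _ _
  rw [hML] at hdetB
  have hkey : 0 < (-1 : ℝ) ^ n * (1 + k ⬝ᵥ (A⁻¹ *ᵥ b)) := by
    rcases Nat.even_or_odd n with he | ho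
    · rw [he.neg_one_pow] at hdetB ⊢
      nlinarith
    · rw [ho.neg_one_pow] at hdetB ⊢
      nlinarith
  refine ⟨(Matrix.isUnit_iff_isUnit_det A).mpr hAdet, by rw [hinner]; exact hkey, ?_, ?_⟩
  · intro he
    rw [he.neg_one_pow] at hkey
    rw [hinner]
    linarith
  · intro ho
    rw [ho.neg_one_pow] at hkey
    rw [hinner]
    linarith
end

section
/- (Theorem 3.2, even case.) Let n be even, M > 0, let A be a real n × n matrix all of whose complex eigenvalues have positive real part (anti-stable), and let b, k ∈ ℝⁿ be such that all complex eigenvalues of A + b kᵀ have negative real part (stabilizing feedback). Then the closed loop system ẋ = A x + b·sat_M(⟨k, x⟩) has a unique equilibrium point, namely x = 0: the only x ∈ ℝⁿ with A x + sat_M(⟨k, x⟩)·b = 0 is x = 0. -/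
open RealInnerProductSpace
open scoped Matrix

lemma Real.sign_mul_abs' (s : ℝ) : Real.sign s * |s| = s := by
  rcases lt_trichotomy s 0 with h | rfl | h
  · rw [Real.sign_of_neg h, abs_of_neg h]; ring
  · simp
  · rw [Real.sign_of_pos h, abs_of_pos h]; ring

lemma Real.mul_sign' (s : ℝ) : s * Real.sign s = |s| := by
  rcases lt_trichotomy s 0 with h | rfl | h
  · rw [Real.sign_of_neg h, abs_of_neg h]; ring
  · simp
  · rw [Real.sign_of_pos h, abs_of_pos h]; ring

open Polynomial in
lemma eval_zero_pos_of_no_nonneg_root (p : ℝ[X]) (hp : 0 < p.leadingCoeff)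
    (h : ∀ x : ℝ, 0 ≤ x → p.eval x ≠ 0) : 0 < p.eval 0 := by
  rcases le_or_gt p.degree 0 with hd | hd
  · have hc := Polynomial.eq_C_of_degree_le_zero hd
    rw [hc, Polynomial.eval_C]
    have : p.leadingCoeff = p.coeff 0 := by
      rw [Polynomial.leadingCoeff, Polynomial.natDegree_eq_zero_iff_degree_le_zero.mpr hd]
    rwa [this] at hp
  · have htend : Filter.Tendsto (fun x => p.eval x) Filter.atTop Filter.atTop :=
      p.tendsto_atTop_of_leadingCoeff_nonneg hd hp.le
    obtain ⟨x₀, hx1, hx0⟩ :=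
      ((htend.eventually_ge_atTop 1).and (Filter.eventually_ge_atTop (0 : ℝ))).exists
    rcases (h 0 le_rfl).lt_or_gt with hneg | hpos
    · exfalso
      have hcont : ContinuousOn (fun x => p.eval x) (Set.Icc 0 x₀) :=
        (Polynomial.continuous p).continuousOn
      have h0mem : (0 : ℝ) ∈ Set.Icc (p.eval 0) (p.eval x₀) :=
        ⟨hneg.le, by linarith⟩
      obtain ⟨c, hc, hc0⟩ := intermediate_value_Icc hx0 hcont h0mem
      exact h c hc.1 hc0
    · exact hpos

open Polynomial in
lemma charpoly_no_nonneg_root {n : ℕ} (B : Matrix (Fin n) (Fin n) ℝ)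
    (h : ∀ μ ∈ (Matrix.charpoly (B.map (algebraMap ℝ ℂ))).roots, μ.re < 0) :
    ∀ x : ℝ, 0 ≤ x → (Matrix.charpoly B).eval x ≠ 0 := by
  intro x hx hev
  have hmap : Matrix.charpoly (B.map (algebraMap ℝ ℂ))
      = (Matrix.charpoly B).map (algebraMap ℝ ℂ) := Matrix.charpoly_map B _
  have hroot : IsRoot ((Matrix.charpoly B).map (algebraMap ℝ ℂ)) ((x : ℝ) : ℂ) :=
    Polynomial.IsRoot.map (f := algebraMap ℝ ℂ) hev
  have hne : (Matrix.charpoly B).map (algebraMap ℝ ℂ) ≠ 0 :=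
    ((Matrix.charpoly_monic B).map _).ne_zero
  have hmem : ((x : ℝ) : ℂ) ∈ (Matrix.charpoly (B.map (algebraMap ℝ ℂ))).roots := by
    rw [hmap, Polynomial.mem_roots hne]
    exact hroot
  have := h _ hmem
  rw [Complex.ofReal_re] at this
  linarith

open Polynomial in
lemma det_pos_of_roots_neg_re {n : ℕ} (hn : Even n) (B : Matrix (Fin n) (Fin n) ℝ)
    (h : ∀ μ ∈ (Matrix.charpoly (B.map (algebraMap ℝ ℂ))).roots, μ.re < 0) :
    0 < B.det := by
  have hlc : 0 < (Matrix.charpoly B).leadingCoeff := by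
    rw [(Matrix.charpoly_monic B).leadingCoeff]; norm_num
  have hpos := eval_zero_pos_of_no_nonneg_root _ hlc (charpoly_no_nonneg_root B h)
  rw [Matrix.det_eq_sign_charpoly_coeff]
  rw [Polynomial.coeff_zero_eq_eval_zero]
  have : ((-1 : ℝ)) ^ Fintype.card (Fin n) = 1 := by
    rw [Fintype.card_fin]; exact hn.neg_one_pow
  rw [this, one_mul]
  exact hpos

open Polynomial in
lemma det_pos_of_roots_pos_re {n : ℕ} (hn : Even n) (B : Matrix (Fin n) (Fin n) ℝ)
    (h : ∀ μ ∈ (Matrix.charpoly (B.map (algebraMap ℝ ℂ))).roots, 0 < μ.re) :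
    0 < B.det := by
  set p := Matrix.charpoly B with hp
  set q := p.comp (-X) with hq
  have hqeval : ∀ x : ℝ, q.eval x = p.eval (-x) := by
    intro x; simp [hq, Polynomial.eval_comp]
  have hdeg : p.natDegree = n := by
    rw [hp, Matrix.charpoly_natDegree_eq_dim, Fintype.card_fin]
  have hqlc : 0 < q.leadingCoeff := by
    rw [hq, Polynomial.leadingCoeff_comp (by simp : (-X : ℝ[X]).natDegree ≠ 0)]
    have : (-X : ℝ[X]).leadingCoeff = -1 := by simp
    rw [this, (Matrix.charpoly_monic B).leadingCoeff, hdeg, one_mul, hn.neg_one_pow]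
    norm_num
  have hnoroot : ∀ x : ℝ, 0 ≤ x → q.eval x ≠ 0 := by
    intro x hx hev
    rw [hqeval] at hev
    -- (-x : ℂ) is a root of the complex charpoly, with re ≤ 0
    have hmap : Matrix.charpoly (B.map (algebraMap ℝ ℂ))
        = p.map (algebraMap ℝ ℂ) := Matrix.charpoly_map B _
    have hroot : IsRoot (p.map (algebraMap ℝ ℂ)) ((-x : ℝ) : ℂ) :=
      Polynomial.IsRoot.map (f := algebraMap ℝ ℂ) hev
    have hne : p.map (algebraMap ℝ ℂ) ≠ 0 := ((Matrix.charpoly_monic B).map _).ne_zero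
    have hmem : ((-x : ℝ) : ℂ) ∈ (Matrix.charpoly (B.map (algebraMap ℝ ℂ))).roots := by
      rw [hmap, Polynomial.mem_roots hne]
      exact hroot
    have := h _ hmem
    rw [Complex.ofReal_re] at this
    linarith
  have hpos := eval_zero_pos_of_no_nonneg_root q hqlc hnoroot
  rw [hqeval, neg_zero] at hpos
  rw [Matrix.det_eq_sign_charpoly_coeff, Polynomial.coeff_zero_eq_eval_zero]
  have : ((-1 : ℝ)) ^ Fintype.card (Fin n) = 1 := by
    rw [Fintype.card_fin]; exact hn.neg_one_pow
  rw [this, one_mul]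
  exact hpos

/-- Theorem 3.2, even case: if `n` is even, `A` is anti-stable and the feedback
`A + b kᵀ` is Hurwitz, then the closed loop system `ẋ = A x + b · sat_M(⟨k, x⟩)`
has the origin as its unique equilibrium point. -/
theorem unique_equilibrium_even {n : ℕ} (hn : Even n) (M : ℝ) (hM : 0 < M)
    (A : Matrix (Fin n) (Fin n) ℝ) (b k : EuclideanSpace ℝ (Fin n))
    (hA : ∀ μ ∈ (Matrix.charpoly (A.map (algebraMap ℝ ℂ))).roots, 0 < μ.re)
    (hABK : ∀ μ ∈ (Matrix.charpoly ((A + Matrix.vecMulVec b k).map (algebraMap ℝ ℂ))).roots,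
      μ.re < 0) :
    ∀ x : EuclideanSpace ℝ (Fin n),
      Matrix.toEuclideanLin A x + sat M ⟪k, x⟫ • b = 0 ↔ x = 0 := by
  have hdetA : 0 < A.det := det_pos_of_roots_pos_re hn A hA
  have hdetB : 0 < (A + Matrix.vecMulVec b k).det := det_pos_of_roots_neg_re hn _ hABK
  intro x
  constructor
  · intro h
    set s := ⟪k, x⟫ with hs
    -- pointwise form in terms of mulVec
    set x' : Fin n → ℝ := (WithLp.equiv 2 (Fin n → ℝ)) x with hx'
    set b' : Fin n → ℝ := (WithLp.equiv 2 (Fin n → ℝ)) b with hb'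
    set k' : Fin n → ℝ := (WithLp.equiv 2 (Fin n → ℝ)) k with hk'
    have hmv : A *ᵥ x' + sat M s • b' = 0 := by
      funext i
      have := congrFun (congrArg (WithLp.equiv 2 (Fin n → ℝ)) h) i
      simpa [Matrix.toEuclideanLin_apply, hx', hb'] using this
    have hsdot : s = k' ⬝ᵥ x' := by
      simp [hs, PiLp.inner_apply, dotProduct, RCLike.inner_apply, hk', hx', mul_comm]
    rcases le_or_gt |s| M with hcase | hcase
    · -- linear regime
      have hsat : sat M s = s := by
        rw [sat, min_eq_right hcase, Real.sign_mul_abs']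
      rw [hsat] at hmv
      have hBx : (A + Matrix.vecMulVec b k) *ᵥ x' = 0 := by
        rw [Matrix.add_mulVec]
        have : Matrix.vecMulVec b k *ᵥ x' = s • b' := by
          funext i
          simp only [Matrix.mulVec, Matrix.vecMulVec_apply, dotProduct, Pi.smul_apply,
            smul_eq_mul, hsdot]
          rw [Finset.sum_mul]
          exact Finset.sum_congr rfl fun j _ => by
            simp only [hb', hk', hx', WithLp.equiv_apply]; ring
        rw [this]
        exact hmv
      have hx0 : x' = 0 := Matrix.eq_zero_of_mulVec_eq_zero hdetB.ne' hBx
      have : x = (WithLp.equiv 2 (Fin n → ℝ)).symm x' := rfl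
      rw [this, hx0]
      simp
    · -- saturated regime : contradiction
      exfalso
      have hsne : s ≠ 0 := fun h0 => by rw [h0] at hcase; simp at hcase; linarith
      have hsat : sat M s = Real.sign s * M := by
        rw [sat, min_eq_left hcase.le]
      set c : ℝ := -(Real.sign s * M) with hc
      have hsign : Real.sign s = 1 ∨ Real.sign s = -1 :=
        (Real.sign_apply_eq_of_ne_zero s hsne).symm.imp id id
      have hcne : c ≠ 0 := by
        rcases hsign with h1 | h1 <;> rw [hc, h1] <;> simp <;> linarith
      have hAx : A *ᵥ x' = c • b' := by
        have := hmv
        rw [hsat] at this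
        funext i
        have := congrFun this i
        simp only [Pi.add_apply, Pi.smul_apply, Pi.zero_apply, smul_eq_mul] at this ⊢
        rw [hc]; linarith
      -- A⁻¹ *ᵥ b' = c⁻¹ • x'
      have hAdet : IsUnit A.det := isUnit_iff_ne_zero.mpr hdetA.ne'
      have hinvb : A⁻¹ *ᵥ b' = c⁻¹ • x' := by
        have h1 : A⁻¹ *ᵥ (A *ᵥ x') = x' := by
          rw [Matrix.mulVec_mulVec, Matrix.nonsing_inv_mul A hAdet, Matrix.one_mulVec]
        rw [hAx] at h1
        rw [Matrix.mulVec_smul] at h1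
        rw [← h1, smul_smul, inv_mul_cancel₀ hcne, one_smul]
      -- matrix determinant lemma
      have hdetlem : (A + Matrix.vecMulVec b k).det
          = A.det * (1 + k' ⬝ᵥ (A⁻¹ *ᵥ b')) := by
        have hbk : Matrix.vecMulVec (b : Fin n → ℝ) (k : Fin n → ℝ)
            = Matrix.replicateCol Unit b' * Matrix.replicateRow Unit k' := Matrix.vecMulVec_eq Unit b' k'
        calc (A + Matrix.vecMulVec b k).det
            = (A + Matrix.replicateCol Unit b' * Matrix.replicateRow Unit k').det := by rw [hbk]
          _ = A.det * (1 + Matrix.replicateRow Unit k' * A⁻¹ * Matrix.replicateCol Unit b').det :=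
              Matrix.det_add_replicateCol_mul_replicateRow hAdet b' k'
          _ = A.det * (1 + k' ⬝ᵥ (A⁻¹ *ᵥ b')) := by
              congr 1
              rw [Matrix.mul_assoc, ← Matrix.replicateCol_mulVec, Matrix.det_unique]
              simp [Matrix.replicateRow_mul_replicateCol_apply]
      rw [hinvb] at hdetlem
      have hdot : k' ⬝ᵥ (c⁻¹ • x') = c⁻¹ * s := by
        rw [dotProduct_smul, hsdot]; rfl
      rw [hdot] at hdetlem
      have hfac : 0 < 1 + c⁻¹ * s := by
        by_contra hle
        push_neg at hle
        nlinarith [hdetB, hdetA, hdetlem]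
      -- but c⁻¹ * s = -|s|/M < -1
      have hcs : c⁻¹ * s = -(|s| / M) := by
        rw [hc, inv_neg, mul_inv, Real.inv_sign, ← Real.mul_sign' s, div_eq_mul_inv]
        ring
      rw [hcs] at hfac
      have : |s| / M > 1 := by
        rw [gt_iff_lt, lt_div_iff₀ hM, one_mul]
        exact hcase
      linarith
  · rintro rfl
    simp [sat]
end

section
/- (Theorem 3.2, odd case.) Let n be odd, M > 0, let A be a real n × n matrix all of whose complex eigenvalues have positive real part (anti-stable), and let b, k ∈ ℝⁿ be such that all complex eigenvalues of A + b kᵀ have negative real part (stabilizing feedback). Then the closed loop system ẋ = A x + b·sat_M(⟨k, x⟩) has exactly three equilibrium points: the set {x ∈ ℝⁿ : A x + sat_M(⟨k, x⟩)·b = 0} equals {0, −M·A⁻¹ b, M·A⁻¹ b}, and these three points are pairwise distinct. Moreover every equilibrium is in general position, i.e. satisfies ⟨k, x⟩ ≠ ±M. -/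
open RealInnerProductSpace

open Polynomial Matrix

section AuxLemmas
variable {n : ℕ}

lemma sat_of_abs_le {M s : ℝ} (h : |s| ≤ M) : sat M s = s := by
  unfold sat
  rw [min_eq_right h]
  rcases lt_trichotomy s 0 with hs | hs | hs
  · rw [Real.sign_of_neg hs, abs_of_neg hs]; ring
  · simp [hs]
  · rw [Real.sign_of_pos hs, abs_of_pos hs]; ring

lemma sat_of_le {M s : ℝ} (hM : 0 < M) (h : M ≤ s) : sat M s = M := by
  have hs : 0 < s := lt_of_lt_of_le hM h
  unfold sat
  rw [Real.sign_of_pos hs, abs_of_pos hs, min_eq_left h, one_mul]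

lemma sat_of_le_neg {M s : ℝ} (hM : 0 < M) (h : s ≤ -M) : sat M s = -M := by
  have hs : s < 0 := lt_of_le_of_lt h (by linarith)
  unfold sat
  rw [Real.sign_of_neg hs, abs_of_neg hs, min_eq_left (by linarith)]
  ring

/-- If a real polynomial has positive leading coefficient, positive degree, and
no nonnegative real roots, then its value at 0 is positive. -/
lemma eval_zero_pos_aux (p : ℝ[X]) (hd : 0 < p.natDegree) (hlc : 0 < p.leadingCoeff)
    (h : ∀ t : ℝ, 0 ≤ t → ¬ p.IsRoot t) : 0 < p.eval 0 := by
  rcases lt_trichotomy (p.eval 0) 0 with h0 | h0 | h0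
  · exfalso
    have htop : Filter.Tendsto (fun x => p.eval x) Filter.atTop Filter.atTop :=
      p.tendsto_atTop_of_leadingCoeff_nonneg (natDegree_pos_iff_degree_pos.mp hd) hlc.le
    obtain ⟨x, hx0, hx1⟩ :=
      ((htop.eventually_ge_atTop 0).and (Filter.eventually_ge_atTop 0)).exists
    have hmem : (0:ℝ) ∈ Set.Icc (p.eval 0) (p.eval x) := ⟨h0.le, hx0⟩
    obtain ⟨t, ht, hpt⟩ := intermediate_value_Icc hx1 p.continuous.continuousOn hmem
    exact h t ht.1 hpt
  · exact absurd h0 (h 0 le_rfl)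
  · exact h0

/-- Monic, odd degree, no nonpositive real roots ⇒ value at 0 is negative. -/
lemma eval_zero_neg_aux (p : ℝ[X]) (hm : p.Monic) (hd : Odd p.natDegree)
    (h : ∀ t : ℝ, t ≤ 0 → ¬ p.IsRoot t) : p.eval 0 < 0 := by
  set q : ℝ[X] := -(p.comp (-X)) with hq
  have hXdeg : (-X : ℝ[X]).natDegree = 1 := by simp
  have hndq : q.natDegree = p.natDegree := by
    rw [hq, natDegree_neg, natDegree_comp, hXdeg, mul_one]
  have hlcq : q.leadingCoeff = 1 := by
    rw [hq, leadingCoeff_neg, leadingCoeff_comp (by rw [hXdeg]; norm_num)]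
    simp [hm.leadingCoeff, hd.neg_one_pow]
  have hdq : 0 < q.natDegree := by rw [hndq]; exact hd.pos
  have hpos : 0 < q.eval 0 := by
    refine eval_zero_pos_aux q hdq (by rw [hlcq]; norm_num) ?_
    intro t ht hroot
    apply h (-t) (by linarith)
    have : q.eval t = -(p.eval (-t)) := by simp [hq, eval_comp]
    simpa [IsRoot, this, neg_eq_zero] using hroot
  have : q.eval 0 = -(p.eval 0) := by simp [hq, eval_comp]
  linarith [this ▸ hpos]

/-- Monic, positive degree, no nonnegative real roots ⇒ value at 0 is positive. -/
lemma eval_zero_pos_aux' (p : ℝ[X]) (hm : p.Monic) (hd : 0 < p.natDegree)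
    (h : ∀ t : ℝ, 0 ≤ t → ¬ p.IsRoot t) : 0 < p.eval 0 :=
  eval_zero_pos_aux p hd (by rw [hm.leadingCoeff]; norm_num) h

/-- A real root of `p` gives a complex root of `p.map (algebraMap ℝ ℂ)`. -/
lemma mem_roots_map_of_isRoot {p : ℝ[X]} (hp : p ≠ 0) {t : ℝ} (ht : p.IsRoot t) :
    ((t : ℂ)) ∈ (p.map (algebraMap ℝ ℂ)).roots := by
  rw [mem_roots ((Polynomial.map_ne_zero_iff (algebraMap ℝ ℂ).injective).mpr hp)]
  show eval (↑t) (p.map (algebraMap ℝ ℂ)) = 0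
  rw [eval_map, show ((t:ℂ)) = algebraMap ℝ ℂ t from rfl, Polynomial.eval₂_at_apply]
  simp [ht.eq_zero]

lemma det_pos_of_antistable (hn : Odd n) (A : Matrix (Fin n) (Fin n) ℝ)
    (hA : ∀ μ ∈ (Matrix.charpoly (A.map (algebraMap ℝ ℂ))).roots, 0 < μ.re) :
    0 < A.det := by
  have hnd : A.charpoly.natDegree = n := by
    rw [charpoly_natDegree_eq_dim, Fintype.card_fin]
  have hmon := A.charpoly_monic
  have hroots : ∀ t : ℝ, t ≤ 0 → ¬ A.charpoly.IsRoot t := by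
    intro t ht hroot
    have hmem := mem_roots_map_of_isRoot hmon.ne_zero hroot
    rw [← Matrix.charpoly_map] at hmem
    have := hA _ hmem
    rw [Complex.ofReal_re] at this
    linarith
  have h0 : A.charpoly.eval 0 < 0 := eval_zero_neg_aux _ hmon (by rw [hnd]; exact hn) hroots
  have hdet := Matrix.det_eq_sign_charpoly_coeff A
  rw [coeff_zero_eq_eval_zero, Fintype.card_fin, hn.neg_one_pow] at hdet
  linarith [hdet]

lemma det_neg_of_hurwitz (hn : Odd n) (B : Matrix (Fin n) (Fin n) ℝ)
    (hB : ∀ μ ∈ (Matrix.charpoly (B.map (algebraMap ℝ ℂ))).roots, μ.re < 0) :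
    B.det < 0 := by
  have hnd : B.charpoly.natDegree = n := by
    rw [charpoly_natDegree_eq_dim, Fintype.card_fin]
  have hmon := B.charpoly_monic
  have hroots : ∀ t : ℝ, 0 ≤ t → ¬ B.charpoly.IsRoot t := by
    intro t ht hroot
    have hmem := mem_roots_map_of_isRoot hmon.ne_zero hroot
    rw [← Matrix.charpoly_map] at hmem
    have := hB _ hmem
    rw [Complex.ofReal_re] at this
    linarith
  have h0 : 0 < B.charpoly.eval 0 := eval_zero_pos_aux' _ hmon (by rw [hnd]; exact hn.pos) hroots
  have hdet := Matrix.det_eq_sign_charpoly_coeff B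
  rw [coeff_zero_eq_eval_zero, Fintype.card_fin, hn.neg_one_pow] at hdet
  linarith [hdet]

lemma det_lemma (A : Matrix (Fin n) (Fin n) ℝ) (hu : IsUnit A.det) (b k : Fin n → ℝ) :
    (A + vecMulVec b k).det = A.det * (1 + k ⬝ᵥ (A⁻¹ *ᵥ b)) := by
  have h1 : A + vecMulVec b k = A * (1 + A⁻¹ * (replicateCol (Fin 1) b * replicateRow (Fin 1) k)) := by
    rw [Matrix.mul_add, Matrix.mul_one, ← Matrix.mul_assoc, Matrix.mul_nonsing_inv _ hu,
      Matrix.one_mul, vecMulVec_eq (Fin 1)]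
    rfl
  rw [h1, det_mul, ← Matrix.mul_assoc, det_one_add_mul_comm]
  congr 1
  rw [det_eq_elem_of_subsingleton _ 0]
  simp [Matrix.add_apply, Matrix.one_apply_eq, Matrix.mul_apply, Matrix.replicateRow_apply,
    Matrix.replicateCol_apply, dotProduct, Matrix.mulVec]

end AuxLemmas

/-- Theorem 3.2, odd case: if `n` is odd, `A` is anti-stable and the feedback
`A + b kᵀ` is Hurwitz, then the closed loop system `ẋ = A x + b · sat_M(⟨k, x⟩)`
has exactly the three pairwise distinct equilibrium points
`0`, `-M • A⁻¹ b` and `M • A⁻¹ b`, all in general position (`⟨k, x⟩ ≠ ±M`). -/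
theorem three_equilibria_odd {n : ℕ} (hn : Odd n) (M : ℝ) (hM : 0 < M)
    (A : Matrix (Fin n) (Fin n) ℝ) (b k : EuclideanSpace ℝ (Fin n))
    (hA : ∀ μ ∈ (Matrix.charpoly (A.map (algebraMap ℝ ℂ))).roots, 0 < μ.re)
    (hABK : ∀ μ ∈ (Matrix.charpoly ((A + Matrix.vecMulVec b k).map (algebraMap ℝ ℂ))).roots,
      μ.re < 0) :
    ({x : EuclideanSpace ℝ (Fin n) | Matrix.toEuclideanLin A x + sat M ⟪k, x⟫ • b = 0}
        = {0, -(M • Matrix.toEuclideanLin A⁻¹ b), M • Matrix.toEuclideanLin A⁻¹ b}) ∧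
    ((0 : EuclideanSpace ℝ (Fin n)) ≠ -(M • Matrix.toEuclideanLin A⁻¹ b) ∧
      (0 : EuclideanSpace ℝ (Fin n)) ≠ M • Matrix.toEuclideanLin A⁻¹ b ∧
      -(M • Matrix.toEuclideanLin A⁻¹ b) ≠ M • Matrix.toEuclideanLin A⁻¹ b) ∧
    (∀ x : EuclideanSpace ℝ (Fin n),
      Matrix.toEuclideanLin A x + sat M ⟪k, x⟫ • b = 0 →
        ⟪k, x⟫ ≠ M ∧ ⟪k, x⟫ ≠ -M) := by
  have hdA : 0 < A.det := det_pos_of_antistable hn A hA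
  have hu : IsUnit A.det := isUnit_iff_ne_zero.mpr (ne_of_gt hdA)
  have hdB : (A + vecMulVec b k).det < 0 := det_neg_of_hurwitz hn _ hABK
  have hdl := det_lemma A hu (fun i => b i) (fun i => k i)
  set u : Fin n → ℝ := A⁻¹ *ᵥ (fun i => b i) with hu_def
  set c : ℝ := (fun i => k i) ⬝ᵥ u with hc_def
  have hc : c < -1 := by nlinarith [hdA, hdB, hdl]
  set e : EuclideanSpace ℝ (Fin n) := M • Matrix.toEuclideanLin A⁻¹ b with he_def
  -- basic bridges
  have hEext : ∀ x y : EuclideanSpace ℝ (Fin n), (∀ i, x i = y i) → x = y :=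
    fun x y h => PiLp.ext h
  have hinner : ∀ x : EuclideanSpace ℝ (Fin n),
      ⟪k, x⟫ = (fun i => k i) ⬝ᵥ (fun i => x i) := by
    intro x; simp [PiLp.inner_apply, RCLike.inner_apply, dotProduct, mul_comm]
  have happ : ∀ (B : Matrix (Fin n) (Fin n) ℝ) (x : EuclideanSpace ℝ (Fin n)) (i : Fin n),
      (Matrix.toEuclideanLin B x) i = B.mulVec (fun j => x j) i := fun B x i => rfl
  have he_app : ∀ i, e i = M * u i := fun i => rfl
  have hAu : A *ᵥ u = fun i => b i := by
    rw [hu_def, mulVec_mulVec, Matrix.mul_nonsing_inv _ hu, one_mulVec]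
  -- inner products of the special points
  have hke : ⟪k, e⟫ = M * c := by
    rw [hinner]
    have h7 : (fun i => e i) = M • u := funext fun i => he_app i
    rw [h7, dotProduct_smul, smul_eq_mul, ← hc_def]
  have hkne : ⟪k, -e⟫ = -(M * c) := by rw [inner_neg_right, hke]
  have hMc : M < -(M * c) := by nlinarith
  have he_ne : e ≠ 0 := by
    intro h
    rw [h, inner_zero_right] at hke
    nlinarith
  -- the three points are solutions
  have hsol_e : Matrix.toEuclideanLin A e + sat M ⟪k, e⟫ • b = 0 := by
    have hs : sat M ⟪k, e⟫ = -M := sat_of_le_neg hM (by rw [hke]; nlinarith)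
    refine hEext _ _ fun i => ?_
    have h1 : (Matrix.toEuclideanLin A e) i = M * b i := by
      rw [happ]
      have h7 : (fun j => e j) = M • u := funext fun j => he_app j
      rw [h7, mulVec_smul, hAu, Pi.smul_apply, smul_eq_mul]
    show (Matrix.toEuclideanLin A e) i + sat M ⟪k, e⟫ * b i = 0
    rw [h1, hs]; ring
  have hsol_ne : Matrix.toEuclideanLin A (-e) + sat M ⟪k, -e⟫ • b = 0 := by
    have hs : sat M ⟪k, -e⟫ = M := sat_of_le hM (by rw [hkne]; nlinarith)
    refine hEext _ _ fun i => ?_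
    have h1 : (Matrix.toEuclideanLin A (-e)) i = -(M * b i) := by
      rw [happ]
      have h7 : (fun j => (-e) j) = (-M) • u := by
        funext j
        show -(e j) = ((-M) • u) j
        rw [he_app, Pi.smul_apply, smul_eq_mul]; ring
      rw [h7, mulVec_smul, hAu, Pi.smul_apply, smul_eq_mul]; ring
    show (Matrix.toEuclideanLin A (-e)) i + sat M ⟪k, -e⟫ * b i = 0
    rw [h1, hs]; ring
  have hsol_0 : Matrix.toEuclideanLin A (0 : EuclideanSpace ℝ (Fin n))
      + sat M ⟪k, (0 : EuclideanSpace ℝ (Fin n))⟫ • b = 0 := by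
    have hs : sat M ⟪k, (0 : EuclideanSpace ℝ (Fin n))⟫ = 0 := by
      rw [inner_zero_right]
      have : sat M (0:ℝ) = (0:ℝ) := sat_of_abs_le (by simp; linarith)
      exact this
    rw [hs, zero_smul, add_zero]
    exact map_zero _
  -- forward direction: any solution is one of the three
  have hforward : ∀ x : EuclideanSpace ℝ (Fin n),
      Matrix.toEuclideanLin A x + sat M ⟪k, x⟫ • b = 0 → x = 0 ∨ x = -e ∨ x = e := by
    intro x hx
    set s := sat M ⟪k, x⟫ with hs_def
    have hfun : A *ᵥ (fun j => x j) = fun i => -(s * b i) := by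
      funext i
      have h := congrArg (fun v : EuclideanSpace ℝ (Fin n) => v i) hx
      have h2 : (Matrix.toEuclideanLin A x) i + s * b i = 0 := h
      rw [happ] at h2
      linarith
    have hx_eq : (fun j => x j) = (-s) • u := by
      have h3 : A⁻¹ *ᵥ (A *ᵥ fun j => x j) = A⁻¹ *ᵥ (fun i => -(s * b i)) := by rw [hfun]
      rw [mulVec_mulVec, Matrix.nonsing_inv_mul _ hu, one_mulVec] at h3
      have h4 : (fun i => -(s * b i)) = (-s) • (fun i => b i) := by
        funext i; simp [smul_eq_mul]
      rw [h3, h4, mulVec_smul, ← hu_def]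
    have ht : ⟪k, x⟫ = -s * c := by
      rw [hinner, hx_eq, dotProduct_smul, smul_eq_mul, ← hc_def]
    rcases le_total M ⟪k, x⟫ with h | h
    · -- t ≥ M : x = -e
      right; left
      have hst : s = M := sat_of_le hM h
      refine hEext _ _ fun i => ?_
      have h5 := congrFun hx_eq i
      rw [hst] at h5
      show x i = -(M * u i)
      simpa using h5
    · rcases le_total ⟪k, x⟫ (-M) with h' | h'
      · -- t ≤ -M : x = e
        right; right
        have hst : s = -M := sat_of_le_neg hM h'
        refine hEext _ _ fun i => ?_
        have h5 := congrFun hx_eq i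
        rw [hst] at h5
        show x i = M * u i
        simpa using h5
      · -- |t| ≤ M : x = 0
        left
        have habs : |⟪k, x⟫| ≤ M := abs_le.mpr ⟨h', h⟩
        have hst : s = ⟪k, x⟫ := sat_of_abs_le habs
        have h6 := ht
        rw [hst] at h6
        have h0 : ⟪k, x⟫ * (1 + c) = 0 := by linear_combination h6
        have h1 : ⟪k, x⟫ = 0 := by
          rcases mul_eq_zero.mp h0 with h9 | h9
          · exact h9
          · exfalso; linarith
        have hs0 : s = 0 := by rw [hst, h1]
        refine hEext _ _ fun i => ?_
        have h5 := congrFun hx_eq i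
        rw [hs0] at h5
        show x i = (0 : ℝ)
        simpa using h5
  -- assemble
  refine ⟨?_, ⟨?_, ?_, ?_⟩, ?_⟩
  · ext x
    simp only [Set.mem_setOf_eq, Set.mem_insert_iff, Set.mem_singleton_iff]
    constructor
    · intro hx
      exact hforward x hx
    · rintro (rfl | rfl | rfl)
      · exact hsol_0
      · exact hsol_ne
      · exact hsol_e
  · intro h
    exact he_ne (neg_eq_zero.mp h.symm)
  · exact fun h => he_ne h.symm
  · intro h
    apply he_ne
    have h2 : e + e = 0 := by nth_rewrite 1 [← h]; exact neg_add_cancel e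
    have h3 : (2:ℝ) • e = 0 := by rw [two_smul]; exact h2
    simpa using (smul_eq_zero.mp h3).resolve_left (by norm_num)
  · intro x hx
    rcases hforward x hx with rfl | rfl | rfl
    · rw [inner_zero_right]
      constructor <;> intro h <;> linarith
    · rw [hkne]
      constructor <;> intro h <;> nlinarith
    · rw [hke]
      constructor <;> intro h <;> nlinarith
end

section
/- Let A be the real 3 × 3 matrix with rows (1, −3, 0), (3, 1, 0), (0, 0, 4), let b = (1, 2, 4)ᵀ and k = (7/3, −4/3, −35/12). Then the characteristic polynomial of A + b kᵀ equals (X + 1)(X + 2)(X + 3); equivalently, the eigenvalues of A + b kᵀ are −1, −2 and −3, so A + b kᵀ is Hurwitz. -/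
open Polynomial

/-- Verification for the paper's 3-dimensional counterexample: with
`A = !![1, -3, 0; 3, 1, 0; 0, 0, 4]`, `b = (1, 2, 4)ᵀ` and
`k = (7/3, -4/3, -35/12)`, the characteristic polynomial of `A + b kᵀ` is
`(X + 1)(X + 2)(X + 3)`, so the eigenvalues are `-1, -2, -3` and `A + b kᵀ`
is Hurwitz. -/
theorem counterexample_closed_loop_hurwitz :
    Matrix.charpoly
        ((!![1, -3, 0; 3, 1, 0; 0, 0, 4] : Matrix (Fin 3) (Fin 3) ℝ)
          + Matrix.vecMulVec ![1, 2, 4] ![7/3, -4/3, -35/12])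
      = (X + C 1) * (X + C 2) * (X + C 3) ∧
    (Matrix.charpoly
        (((!![1, -3, 0; 3, 1, 0; 0, 0, 4] : Matrix (Fin 3) (Fin 3) ℝ)
          + Matrix.vecMulVec ![1, 2, 4] ![7/3, -4/3, -35/12]).map
            (algebraMap ℝ ℂ))).roots = {-1, -2, -3} ∧
    ∀ μ ∈ (Matrix.charpoly
        (((!![1, -3, 0; 3, 1, 0; 0, 0, 4] : Matrix (Fin 3) (Fin 3) ℝ)
          + Matrix.vecMulVec ![1, 2, 4] ![7/3, -4/3, -35/12]).map
            (algebraMap ℝ ℂ))).roots, μ.re < 0 := by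
  have h1 : Matrix.charpoly
        ((!![1, -3, 0; 3, 1, 0; 0, 0, 4] : Matrix (Fin 3) (Fin 3) ℝ)
          + Matrix.vecMulVec ![1, 2, 4] ![7/3, -4/3, -35/12])
      = (X + C 1) * (X + C 2) * (X + C 3) := by
    have hM : (!![1, -3, 0; 3, 1, 0; 0, 0, 4] : Matrix (Fin 3) (Fin 3) ℝ)
            + Matrix.vecMulVec ![1, 2, 4] ![7/3, -4/3, -35/12]
        = !![10/3, -13/3, -35/12; 23/3, -5/3, -35/6; 28/3, -16/3, -23/3] := by
      ext i j
      fin_cases i <;> fin_cases j <;>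
        simp [Matrix.vecMulVec_apply] <;> norm_num
    rw [hM, Matrix.charpoly, Matrix.det_fin_three]
    apply Polynomial.funext; intro x
    simp [Matrix.charmatrix_apply]
    ring
  have h2 : Matrix.charpoly
        (((!![1, -3, 0; 3, 1, 0; 0, 0, 4] : Matrix (Fin 3) (Fin 3) ℝ)
          + Matrix.vecMulVec ![1, 2, 4] ![7/3, -4/3, -35/12]).map
            (algebraMap ℝ ℂ))
      = (X + C 1) * (X + C 2) * (X + C 3) := by
    rw [Matrix.charpoly_map, h1]
    simp [Polynomial.map_mul]
  have hroots : (Matrix.charpoly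
        (((!![1, -3, 0; 3, 1, 0; 0, 0, 4] : Matrix (Fin 3) (Fin 3) ℝ)
          + Matrix.vecMulVec ![1, 2, 4] ![7/3, -4/3, -35/12]).map
            (algebraMap ℝ ℂ))).roots = ({-1, -2, -3} : Multiset ℂ) := by
    rw [h2]
    have hne : ∀ a : ℂ, (X + C a) ≠ 0 := fun a => X_add_C_ne_zero a
    have hr : ∀ a : ℂ, (X + C a).roots = {-a} := by
      intro a
      rw [show X + C a = X - C (-a) by rw [map_neg, sub_neg_eq_add]]
      exact roots_X_sub_C (-a)
    rw [roots_mul (mul_ne_zero (mul_ne_zero (hne 1) (hne 2)) (hne 3)),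
      roots_mul (mul_ne_zero (hne 1) (hne 2)), hr, hr, hr]
    rfl
  refine ⟨h1, hroots, ?_⟩
  intro μ hμ
  rw [hroots] at hμ
  fin_cases hμ <;> norm_num
end
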